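/- Let K₀ = L²([2,3]) (with Lebesgue measure) and let T be the bounded multiplication operator on K₀ given by (Tf)(t) = t·f(t) for almost every t ∈ [2,3]. Let K = ℓ²(ℕ) (indexed from n = 1), let C and D be the diagonal operators on K with diagonals (1/n²)_n and (1/n³)_n respectively, and put L = K₀ ⊕ K and H = L ⊕ L. Then the systems (H; L ⊕ 0, graph(T ⊕ C)) and (H; L ⊕ 0, graph(T ⊕ D)) are not boundedly isomorphic, where T ⊕ C and T ⊕ D denote the direct sum operators on L = K₀ ⊕ K. -/

import Mathlib

/- STATEMENT 18: Let K₀ = L²([2,3]), T the multiplication operator (Tf)(t) = t·f(t) on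
K₀, and C, D the diagonal operators on K = ℓ²(ℕ) (indexed from 1) with diagonals
(1/n²)ₙ and (1/n³)ₙ. With L = K₀ ⊕ K and H = L ⊕ L, the systems
(H; L ⊕ 0, graph (T ⊕ C)) and (H; L ⊕ 0, graph (T ⊕ D)) are not boundedly isomorphic.
(Indexing: Lean's n : ℕ corresponds to the paper's n + 1.) -/

noncomputable section
open MeasureTheory
open scoped ENNReal NNReal

abbrev μ23 : Measure ℝ := volume.restrict (Set.Icc (2 : ℝ) 3)

abbrev K₀ : Type := Lp ℂ 2 μ23

abbrev K : Type := lp (fun _ : ℕ => ℂ) 2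

/-- The graph of the direct sum of a bounded operator T on K₀ and the diagonal operator
on K with diagonals `c`, as a subspace of (K₀ × K) × (K₀ × K). -/
def sumGraph (T : K₀ →L[ℂ] K₀) (c : ℕ → ℂ) : Submodule ℂ ((K₀ × K) × (K₀ × K)) where
  carrier := {p | p.2.1 = T p.1.1 ∧ ∀ n, p.2.2 n = c n * p.1.2 n}
  add_mem' := by
    rintro p q ⟨hp1, hp2⟩ ⟨hq1, hq2⟩
    refine ⟨?_, fun n => ?_⟩
    · simp [Prod.fst_add, Prod.snd_add, hp1, hq1, map_add]
    · simp only [Prod.snd_add, Prod.fst_add, lp.coeFn_add, Pi.add_apply, hp2 n, hq2 n]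
      ring
  zero_mem' := ⟨by simp, fun n => by simp [lp.coeFn_zero]⟩
  smul_mem' := by
    rintro z p ⟨hp1, hp2⟩
    refine ⟨?_, fun n => ?_⟩
    · simp [Prod.smul_fst, Prod.smul_snd, hp1, _root_.map_smul]
    · simp only [Prod.smul_snd, Prod.smul_fst, lp.coeFn_smul, Pi.smul_apply, hp2 n,
        smul_eq_mul]
      ring

namespace Helpers

lemma two_toReal : (2 : ℝ≥0∞).toReal = 2 := by norm_num

lemma rpow_two_eq (r : ℝ) : r ^ (2 : ℝ≥0∞).toReal = r ^ (2:ℕ) := by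
  rw [two_toReal, show (2:ℝ) = ((2:ℕ):ℝ) by norm_num, Real.rpow_natCast]

lemma summable_sq (g : K) : Summable fun n => ‖g n‖ ^ (2:ℕ) := by
  have h := (lp.memℓp g).summable (p := 2) (by norm_num)
  simpa only [rpow_two_eq] using h

lemma lp_norm_sq (x : K) : ‖x‖ ^ (2:ℕ) = ∑' n, ‖x n‖ ^ (2:ℕ) := by
  have h := lp.norm_rpow_eq_tsum (p := 2) (by norm_num) x
  simpa only [rpow_two_eq] using h

lemma memℓp_two_dominated {f : ℕ → ℂ} (g : K) (h : ∀ n, ‖f n‖ ≤ ‖g n‖) :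
    Memℓp f 2 := by
  apply memℓp_gen
  have hs : Summable fun n => ‖g n‖ ^ (2:ℕ) := summable_sq g
  have : Summable fun n => ‖f n‖ ^ (2:ℕ) := by
    refine Summable.of_nonneg_of_le (fun n => by positivity) (fun n => ?_) hs
    exact pow_le_pow_left₀ (norm_nonneg _) (h n) 2
  simpa only [rpow_two_eq] using this

lemma norm_le_of_coord {x y : K} {a : ℝ} (ha : 0 ≤ a) (h : ∀ n, ‖x n‖ ≤ a * ‖y n‖) :
    ‖x‖ ≤ a * ‖y‖ := by
  have hx := lp_norm_sq x
  have hy := lp_norm_sq y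
  have hsq : ‖x‖ ^ (2:ℕ) ≤ (a * ‖y‖) ^ (2:ℕ) := by
    rw [hx, mul_pow, hy, ← tsum_mul_left]
    refine Summable.tsum_le_tsum (fun n => ?_) (summable_sq x) ?_
    · have := pow_le_pow_left₀ (norm_nonneg _) (h n) 2
      simpa [mul_pow] using this
    · exact (summable_sq y).mul_left _
  nlinarith [norm_nonneg x, mul_nonneg ha (norm_nonneg y)]


/-- underlying function of the diagonal operator -/
def diagFun (σ : ℕ → ℂ) (hσ : ∀ n, ‖σ n‖ ≤ 1) (x : K) : K :=
  ⟨fun n => σ n * x n, memℓp_two_dominated x (fun n => by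
    calc ‖σ n * x n‖ = ‖σ n‖ * ‖x n‖ := norm_mul _ _
    _ ≤ 1 * ‖x n‖ := by gcongr; exact hσ n
    _ = ‖x n‖ := one_mul _)⟩

@[simp] lemma diagFun_apply (σ : ℕ → ℂ) (hσ : ∀ n, ‖σ n‖ ≤ 1) (x : K) (n : ℕ) :
    (diagFun σ hσ x) n = σ n * x n := rfl

lemma diagFun_norm_le (σ : ℕ → ℂ) (hσ : ∀ n, ‖σ n‖ ≤ 1) (x : K) :
    ‖diagFun σ hσ x‖ ≤ 1 * ‖x‖ := by
  refine norm_le_of_coord zero_le_one (fun n => ?_)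
  rw [diagFun_apply]
  calc ‖σ n * x n‖ = ‖σ n‖ * ‖x n‖ := norm_mul _ _
  _ ≤ 1 * ‖x n‖ := by gcongr; exact hσ n

/-- The diagonal operator on `K` with bounded diagonal `σ`. -/
def diag (σ : ℕ → ℂ) (hσ : ∀ n, ‖σ n‖ ≤ 1) : K →L[ℂ] K :=
  LinearMap.mkContinuous
    { toFun := diagFun σ hσ
      map_add' := fun x y => by
        apply lp.ext
        funext n
        simp only [diagFun_apply, lp.coeFn_add, Pi.add_apply]
        ring
      map_smul' := fun a x => by
        apply lp.ext
        funext n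
        simp only [diagFun_apply, lp.coeFn_smul, Pi.smul_apply, smul_eq_mul,
          RingHom.id_apply]
        ring }
    1 (fun x => diagFun_norm_le σ hσ x)

@[simp] lemma diag_apply (σ : ℕ → ℂ) (hσ : ∀ n, ‖σ n‖ ≤ 1) (x : K) (n : ℕ) :
    (diag σ hσ x) n = σ n * x n := rfl

/-! ### concrete sequences -/

def cc : ℕ → ℂ := fun n => 1 / ((n:ℂ)+1)^2
def dd : ℕ → ℂ := fun n => 1 / ((n:ℂ)+1)^3

lemma cast_succ_pos (n : ℕ) : (0:ℝ) < (n:ℝ)+1 := by positivity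

lemma norm_cc (n : ℕ) : ‖cc n‖ = 1/((n:ℝ)+1)^2 := by
  have h : ((n:ℂ)+1) = (((n+1 : ℕ)) : ℂ) := by push_cast; ring
  rw [cc, norm_div, norm_one, h, norm_pow, Complex.norm_natCast]
  push_cast; ring

lemma norm_dd (n : ℕ) : ‖dd n‖ = 1/((n:ℝ)+1)^3 := by
  have h : ((n:ℂ)+1) = (((n+1 : ℕ)) : ℂ) := by push_cast; ring
  rw [dd, norm_div, norm_one, h, norm_pow, Complex.norm_natCast]
  push_cast; ring

lemma one_le_cast_succ (n : ℕ) : (1:ℝ) ≤ (n:ℝ)+1 := by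
  have := Nat.cast_nonneg (α := ℝ) n; linarith

lemma cc_le_one : ∀ n, ‖cc n‖ ≤ 1 := by
  intro n; rw [norm_cc, div_le_one (by positivity)]
  exact one_le_pow₀ (one_le_cast_succ n)

lemma dd_le_one : ∀ n, ‖dd n‖ ≤ 1 := by
  intro n; rw [norm_dd, div_le_one (by positivity)]
  exact one_le_pow₀ (one_le_cast_succ n)

def Cop : K →L[ℂ] K := diag cc cc_le_one
def Dop : K →L[ℂ] K := diag dd dd_le_one

lemma Dop_high (k : ℕ) (x : K) (hx : ∀ n, n < k → x n = 0) :
    ‖Dop x‖ ≤ (1/((k:ℝ)+1)^3) * ‖x‖ := by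
  refine norm_le_of_coord (by positivity) (fun n => ?_)
  show ‖dd n * x n‖ ≤ _
  rcases lt_or_ge n k with h | h
  · rw [hx n h, mul_zero, norm_zero]
    positivity
  · rw [norm_mul, norm_dd]
    have hkn : ((k:ℝ)+1)^3 ≤ ((n:ℝ)+1)^3 := by
      have : (k:ℝ) ≤ (n:ℝ) := by exact_mod_cast h
      gcongr <;> linarith [Nat.cast_nonneg (α := ℝ) k]
    have h1 : 1/((n:ℝ)+1)^3 ≤ 1/((k:ℝ)+1)^3 := by
      apply one_div_le_one_div_of_le (by positivity) hkn
    exact mul_le_mul_of_nonneg_right h1 (norm_nonneg _)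

lemma Cop_high (m : ℕ) (x : K) (hx : ∀ n, n < m → x n = 0) :
    ‖Cop x‖ ≤ (1/((m:ℝ)+1)^2) * ‖x‖ := by
  refine norm_le_of_coord (by positivity) (fun n => ?_)
  show ‖cc n * x n‖ ≤ _
  rcases lt_or_ge n m with h | h
  · rw [hx n h, mul_zero, norm_zero]
    positivity
  · rw [norm_mul, norm_cc]
    have hkn : ((m:ℝ)+1)^2 ≤ ((n:ℝ)+1)^2 := by
      have : (m:ℝ) ≤ (n:ℝ) := by exact_mod_cast h
      gcongr <;> linarith [Nat.cast_nonneg (α := ℝ) m]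
    have h1 : 1/((n:ℝ)+1)^2 ≤ 1/((m:ℝ)+1)^2 := by
      apply one_div_le_one_div_of_le (by positivity) hkn
    exact mul_le_mul_of_nonneg_right h1 (norm_nonneg _)

lemma Cop_low (M : ℕ) (x : K) (hx : ∀ n, M ≤ n → x n = 0) :
    ‖x‖ ≤ ((M:ℝ)+1)^2 * ‖Cop x‖ := by
  refine norm_le_of_coord (by positivity) (fun n => ?_)
  show ‖x n‖ ≤ ((M:ℝ)+1)^2 * ‖cc n * x n‖
  rcases lt_or_ge n M with h | h
  · rw [norm_mul, norm_cc, ← mul_assoc]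
    have h1 : ((n:ℝ)+1)^2 ≤ ((M:ℝ)+1)^2 := by
      have : (n:ℝ) ≤ (M:ℝ) := by exact_mod_cast le_of_lt h
      gcongr <;> linarith [Nat.cast_nonneg (α := ℝ) n]
    have h2 : (0:ℝ) < ((n:ℝ)+1)^2 := by positivity
    have h3 : (1:ℝ) ≤ ((M:ℝ)+1)^2 * (1/((n:ℝ)+1)^2) := by
      rw [mul_one_div, le_div_iff₀ h2, one_mul]
      exact h1
    nlinarith [norm_nonneg ((x : ∀ _ : ℕ, ℂ) n)]
  · rw [hx n h, norm_zero]
    positivity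

/-! ### the "high frequency" submodule -/

def coordCLM (n : ℕ) : K →L[ℂ] ℂ :=
  LinearMap.mkContinuous
    { toFun := fun x => x n
      map_add' := fun x y => by simp [lp.coeFn_add]
      map_smul' := fun a x => by simp [lp.coeFn_smul] }
    1 (fun x => by show ‖x n‖ ≤ 1 * ‖x‖; simpa using lp.norm_apply_le_norm (by norm_num) x n)

@[simp] lemma coordCLM_apply (n : ℕ) (x : K) : coordCLM n x = x n := rfl

def high (k : ℕ) : Submodule ℂ K where
  carrier := {x : K | ∀ n, n < k → x n = 0}
  add_mem' := by
    intro a b ha hb n hn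
    simp [lp.coeFn_add, ha n hn, hb n hn]
  zero_mem' := by intro n hn; simp [lp.coeFn_zero]
  smul_mem' := by
    intro a x hx n hn
    simp [lp.coeFn_smul, hx n hn]

lemma mem_high {k : ℕ} {x : K} : x ∈ high k ↔ ∀ n, n < k → x n = 0 := Iff.rfl

lemma isClosed_high (k : ℕ) : IsClosed (high k : Set K) := by
  have : (high k : Set K) = ⋂ (n : ℕ) (_ : n < k), (coordCLM n) ⁻¹' {0} := by
    ext x
    simp [mem_high]
  rw [this]
  exact isClosed_iInter fun n => isClosed_iInter fun _ =>
    isClosed_singleton.preimage (coordCLM n).continuous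

local notation "⟪" x ", " y "⟫" => @inner ℂ _ _ x y

lemma lp_single_add (i : ℕ) (a b : ℂ) :
    lp.single 2 i (a + b) = (lp.single 2 i a : K) + lp.single 2 i b := by
  apply lp.ext
  funext j
  rcases eq_or_ne j i with h | h
  · subst h
    simp only [lp.coeFn_add, Pi.add_apply, lp.single_apply_self]
  · simp only [lp.coeFn_add, Pi.add_apply, lp.single_apply_ne 2 i _ h, add_zero]

lemma lp_single_eq_smul (i : ℕ) (a : ℂ) :
    (lp.single 2 i a : K) = a • lp.single 2 i (1:ℂ) := by
  rw [← lp.single_smul]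
  simp [smul_eq_mul]

lemma sum_single_apply_lt {M : ℕ} (a : Fin M → ℂ) (n : ℕ) (hn : n < M) :
    (∑ i : Fin M, (lp.single 2 (i:ℕ) (a i) : K)) n = a ⟨n, hn⟩ := by
  have hcs : ⇑(∑ i : Fin M, (lp.single 2 (i:ℕ) (a i) : K)) =
      ∑ i : Fin M, ⇑(lp.single 2 (i:ℕ) (a i) : K) :=
    lp.coeFn_sum _ _
  have h2 : (∑ i : Fin M, (lp.single 2 (i:ℕ) (a i) : K)) n =
      ∑ i : Fin M, ((lp.single 2 (i:ℕ) (a i) : K) n) := by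
    rw [hcs]
    exact Finset.sum_apply n Finset.univ _
  have h3 : ∑ i : Fin M, ((lp.single 2 (i:ℕ) (a i) : K) n) = a ⟨n, hn⟩ := by
    rw [Finset.sum_eq_single (⟨n, hn⟩ : Fin M)]
    · exact lp.single_apply_self (E := fun _ : ℕ => ℂ) 2 n (a ⟨n, hn⟩)
    · intro j _ hj
      exact lp.single_apply_ne (E := fun _ : ℕ => ℂ) 2 (j:ℕ) _ (fun hh => hj (Fin.ext hh.symm))
    · intro h; exact absurd (Finset.mem_univ _) h
  rw [h2, h3]

lemma sum_single_apply_ge {M : ℕ} (a : Fin M → ℂ) (n : ℕ) (hn : M ≤ n) :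
    (∑ i : Fin M, (lp.single 2 (i:ℕ) (a i) : K)) n = 0 := by
  have hcs : ⇑(∑ i : Fin M, (lp.single 2 (i:ℕ) (a i) : K)) =
      ∑ i : Fin M, ⇑(lp.single 2 (i:ℕ) (a i) : K) :=
    lp.coeFn_sum _ _
  have h2 : (∑ i : Fin M, (lp.single 2 (i:ℕ) (a i) : K)) n =
      ∑ i : Fin M, ((lp.single 2 (i:ℕ) (a i) : K) n) := by
    rw [hcs]
    exact Finset.sum_apply n Finset.univ _
  rw [h2]
  refine Finset.sum_eq_zero (fun j _ => ?_)
  refine lp.single_apply_ne (E := fun _ : ℕ => ℂ) 2 (j:ℕ) _ (fun h => ?_)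
  subst h
  exact absurd hn (not_le.mpr j.isLt)

set_option maxHeartbeats 1000000 in
theorem endgame (e f : K →L[ℂ] K) (A B β : ℝ) (hA : 0 ≤ A) (hB : 0 ≤ B) (hβ : 0 ≤ β)
    (hI : ∀ u : K, ‖u - e (f u)‖ ≤ A * ‖Dop u‖)
    (hII : ∀ u : K, ‖u - f (e u)‖ ≤ B * ‖Cop u‖)
    (hIII : ∀ u : K, ‖Cop (f u)‖ ≤ β * ‖Dop u‖) : False := by
  classical
  -- constants
  set G : ℝ := 2*(‖e‖+1) with hGdef
  have hGpos : 0 < G := by positivity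
  set m₀ : ℕ := ⌈2*B⌉₊ with hm₀def
  have hm₀ : B * (1/((m₀:ℝ)+1)^2) ≤ 1/2 := by
    have h1 : 2*B ≤ (m₀:ℝ)+1 := by
      rw [hm₀def]
      exact le_trans (Nat.le_ceil _) (by linarith)
    have h2 : (1:ℝ) ≤ (m₀:ℝ)+1 := one_le_cast_succ m₀
    rw [mul_one_div, div_le_div_iff₀ (by positivity) (by norm_num)]
    nlinarith
  set k₀ : ℕ := ⌈2*A⌉₊ with hk₀def
  set N : ℕ := ⌈β*G*((m₀:ℝ)+2)^2⌉₊ + 1 with hNdef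
  set k : ℕ := k₀ + N with hkdef
  set M : ℕ := k + m₀ + 1 with hMdef
  have hkk₀ : k₀ ≤ k := Nat.le_add_right _ _
  have hkN : β*G*((m₀:ℝ)+2)^2 < (k:ℝ)+1 := by
    have h1 : β*G*((m₀:ℝ)+2)^2 ≤ (⌈β*G*((m₀:ℝ)+2)^2⌉₊ : ℝ) := Nat.le_ceil _
    have h2 : ((⌈β*G*((m₀:ℝ)+2)^2⌉₊ : ℕ) : ℝ) < (k:ℝ)+1 := by
      have : (⌈β*G*((m₀:ℝ)+2)^2⌉₊ : ℕ) < k + 1 := by omega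
      exact_mod_cast this
    linarith
  -- Step A : f is bounded below on `high k`
  have stepA : ∀ u : K, u ∈ high k → ‖u‖ ≤ G * ‖f u‖ := by
    intro u hu
    have hd : ‖Dop u‖ ≤ (1/((k:ℝ)+1)^3) * ‖u‖ := Dop_high k u hu
    have hAk : A * (1/((k:ℝ)+1)^3) ≤ 1/2 := by
      have h1 : 2*A ≤ (k₀:ℝ)+1 := by
        rw [hk₀def]
        exact le_trans (Nat.le_ceil _) (by linarith)
      have h2 : (k₀:ℝ)+1 ≤ (k:ℝ)+1 := by
        have : (k₀:ℝ) ≤ (k:ℝ) := by exact_mod_cast hkk₀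
        linarith
      have h3 : (k:ℝ)+1 ≤ ((k:ℝ)+1)^3 := by
        have hx := one_le_cast_succ k
        nlinarith [hx, sq_nonneg ((k:ℝ)+1), mul_le_mul_of_nonneg_left (one_le_pow₀ (n := 2) hx) (le_trans zero_le_one hx)]
      have h4 : (2*A) ≤ ((k:ℝ)+1)^3 := by linarith
      rw [mul_one_div, div_le_div_iff₀ (by positivity) (by norm_num)]
      nlinarith
    have h5 : ‖u‖ ≤ ‖e (f u)‖ + ‖u - e (f u)‖ := by
      have := norm_add_le (e (f u)) (u - e (f u))
      simpa using this
    have h6 : ‖e (f u)‖ ≤ ‖e‖ * ‖f u‖ := e.le_opNorm _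
    have h7 : ‖u - e (f u)‖ ≤ (1/2) * ‖u‖ := by
      calc ‖u - e (f u)‖ ≤ A * ‖Dop u‖ := hI u
      _ ≤ A * ((1/((k:ℝ)+1)^3) * ‖u‖) := by
          apply mul_le_mul_of_nonneg_left hd hA
      _ = (A * (1/((k:ℝ)+1)^3)) * ‖u‖ := by ring
      _ ≤ (1/2) * ‖u‖ := mul_le_mul_of_nonneg_right hAk (norm_nonneg _)
    have h8 : ‖u‖ ≤ 2*‖e‖*‖f u‖ := by linarith
    have h9 : 2*‖e‖*‖f u‖ ≤ G * ‖f u‖ := by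
      have hfu : (0:ℝ) ≤ ‖f u‖ := norm_nonneg (f u)
      nlinarith [hfu]
    linarith
  -- the submodules
  set Vk : Submodule ℂ K := high k with hVkdef
  set Yk : Submodule ℂ K := Vk.map (f : K →ₗ[ℂ] K) with hYkdef
  set Xk : Submodule ℂ K := Ykᗮ with hXkdef
  -- orthogonality to Xk of images of high vectors
  have hYmem : ∀ u : K, u ∈ Vk → f u ∈ Yk := by
    intro u hu
    exact ⟨u, hu, rfl⟩
  -- key fact: if ξ ∈ Xk pairs to zero with f(single i 1) for i < k, then ξ ⟂ range f
  have claim1 : ∀ ξ : K, ξ ∈ Xk → (∀ i : ℕ, i < k → ⟪f (lp.single 2 i 1), ξ⟫ = 0) →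
      ∀ u : K, ⟪f u, ξ⟫ = 0 := by
    intro ξ hξ hsing u
    set ulow : K := ∑ i ∈ Finset.range k, lp.single 2 i (u i) with hulow
    have hhigh : u - ulow ∈ Vk := by
      intro n hn
      have hcoord : ulow n = u n := by
        have hcs : ⇑(∑ i ∈ Finset.range k, (lp.single 2 i (u i) : K)) =
            ∑ i ∈ Finset.range k, ⇑(lp.single 2 i (u i) : K) :=
          lp.coeFn_sum _ _
        have h2 : ulow n = ∑ i ∈ Finset.range k, ((lp.single 2 i (u i) : K) n) := by
          rw [hulow]
          rw [hcs]
          exact Finset.sum_apply n (Finset.range k) _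
        rw [h2, Finset.sum_eq_single n]
        · exact lp.single_apply_self (E := fun _ : ℕ => ℂ) 2 n (u n)
        · intro j _ hj
          exact lp.single_apply_ne (E := fun _ : ℕ => ℂ) 2 j _ (Ne.symm hj)
        · intro h; exact absurd (Finset.mem_range.mpr hn) h
      simp only [lp.coeFn_sub, Pi.sub_apply, hcoord, sub_self]
    have h1 : ⟪f (u - ulow), ξ⟫ = 0 := by
      exact (Submodule.mem_orthogonal Yk ξ).mp hξ _ (hYmem _ hhigh)
    have h2 : ⟪f ulow, ξ⟫ = 0 := by
      rw [hulow, map_sum, sum_inner]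
      refine Finset.sum_eq_zero (fun i hi => ?_)
      rw [lp_single_eq_smul, f.map_smul, inner_smul_left,
        hsing i (Finset.mem_range.mp hi), mul_zero]
    have h3 : f u = f ulow + f (u - ulow) := by
      rw [← map_add]; congr 1; abel
    rw [h3, inner_add_left, h1, h2, add_zero]
  -- Step B : Xk is finite dimensional with finrank ≤ k + m₀
  have hm₀' : ∀ ξ : K, ξ ∈ Xk → (∀ i : ℕ, i < k → ⟪f (lp.single 2 i 1), ξ⟫ = 0) →
      (∀ n : ℕ, n < m₀ → ξ n = 0) → ξ = 0 := by
    intro ξ hξ hsing hlow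
    have hq := claim1 ξ hξ hsing
    have h0 : ⟪f (e ξ), ξ⟫ = 0 := hq (e ξ)
    have h1 : ⟪ξ, ξ⟫ = ⟪ξ - f (e ξ), ξ⟫ := by
      rw [inner_sub_left, h0, sub_zero]
    have h2 : ‖ξ‖^2 ≤ ‖ξ - f (e ξ)‖ * ‖ξ‖ := by
      have h3 : ⟪ξ, ξ⟫ = ((‖ξ‖:ℂ))^2 := inner_self_eq_norm_sq_to_K ξ
      have h4 : ‖ξ‖^2 = ‖⟪ξ, ξ⟫‖ := by
        rw [h3, norm_pow]
        simp [abs_of_nonneg (norm_nonneg ξ)]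
      rw [h4, h1]
      exact norm_inner_le_norm _ _
    have h5 : ‖ξ - f (e ξ)‖ ≤ B * ‖Cop ξ‖ := hII ξ
    have h6 : ‖Cop ξ‖ ≤ (1/((m₀:ℝ)+1)^2) * ‖ξ‖ := Cop_high m₀ ξ hlow
    have h7 : ‖ξ‖^2 ≤ (1/2) * (‖ξ‖ * ‖ξ‖) := by
      have := mul_le_mul_of_nonneg_right
        (le_trans h5 (mul_le_mul_of_nonneg_left h6 hB)) (norm_nonneg ξ)
      calc ‖ξ‖^2 ≤ ‖ξ - f (e ξ)‖ * ‖ξ‖ := h2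
      _ ≤ (B * ((1/((m₀:ℝ)+1)^2) * ‖ξ‖)) * ‖ξ‖ := this
      _ = (B * (1/((m₀:ℝ)+1)^2)) * (‖ξ‖ * ‖ξ‖) := by ring
      _ ≤ (1/2) * (‖ξ‖ * ‖ξ‖) :=
        mul_le_mul_of_nonneg_right hm₀ (mul_nonneg (norm_nonneg _) (norm_nonneg _))
    have h8 : ‖ξ‖ = 0 := by nlinarith [norm_nonneg ξ, sq_nonneg ‖ξ‖]
    exact norm_eq_zero.mp h8
  -- the comparison map on Xk
  let Λ : Xk →ₗ[ℂ] (Fin k → ℂ) × (Fin m₀ → ℂ) :=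
    { toFun := fun ξ => (fun i => ⟪f (lp.single 2 (i:ℕ) 1), (ξ:K)⟫, fun i => (ξ:K) (i:ℕ))
      map_add' := fun ξ η => by
        have hco : ((ξ + η : Xk) : K) = (ξ:K) + (η:K) := rfl
        refine Prod.ext ?_ ?_ <;> funext i
        · show ⟪f (lp.single 2 (i:ℕ) 1), ((ξ + η : Xk):K)⟫ = _
          rw [hco, inner_add_right]
          rfl
        · show ((ξ + η : Xk):K) (i:ℕ) = _
          rw [hco, lp.coeFn_add]
          rfl
      map_smul' := fun a ξ => by
        have hco : ((a • ξ : Xk) : K) = a • (ξ:K) := rfl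
        refine Prod.ext ?_ ?_ <;> funext i
        · show ⟪f (lp.single 2 (i:ℕ) 1), ((a • ξ : Xk):K)⟫ = _
          rw [hco, inner_smul_right]
          rfl
        · show ((a • ξ : Xk):K) (i:ℕ) = _
          rw [hco, lp.coeFn_smul]
          rfl }
  have hΛinj : Function.Injective Λ := by
    rw [← LinearMap.ker_eq_bot]
    rw [Submodule.eq_bot_iff]
    intro ξ hξker
    rw [LinearMap.mem_ker] at hξker
    have hfst : ∀ i : ℕ, i < k → ⟪f (lp.single 2 i 1), (ξ:K)⟫ = 0 := by
      intro i hi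
      have := congrFun (congrArg Prod.fst hξker) ⟨i, hi⟩
      simpa [Λ] using this
    have hsnd : ∀ n : ℕ, n < m₀ → (ξ:K) n = 0 := by
      intro n hn
      have := congrFun (congrArg Prod.snd hξker) ⟨n, hn⟩
      simpa [Λ] using this
    have : (ξ:K) = 0 := hm₀' (ξ:K) ξ.2 hfst hsnd
    exact Subtype.ext this
  have hXfd : FiniteDimensional ℂ Xk := FiniteDimensional.of_injective Λ hΛinj
  have hXrank : Module.finrank ℂ Xk ≤ k + m₀ := by
    have h := LinearMap.finrank_le_finrank_of_injective hΛinj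
    rw [Module.finrank_prod, Module.finrank_fintype_fun_eq_card,
      Module.finrank_fintype_fun_eq_card, Fintype.card_fin, Fintype.card_fin] at h
    exact h
  -- find a nonzero w supported below M, orthogonal to Xk
  let b : Module.Basis (Fin (Module.finrank ℂ Xk)) ℂ Xk := Module.finBasis ℂ Xk
  let ws : (Fin M → ℂ) →ₗ[ℂ] K :=
    { toFun := fun a => ∑ i : Fin M, lp.single 2 (i:ℕ) (a i)
      map_add' := fun a a' => by
        rw [← Finset.sum_add_distrib]
        refine Finset.sum_congr rfl (fun i _ => ?_)
        exact lp_single_add (i:ℕ) (a i) (a' i)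
      map_smul' := fun t a => by
        show ∑ i : Fin M, (lp.single 2 (i:ℕ) ((t • a) i) : K)
            = t • ∑ i : Fin M, (lp.single 2 (i:ℕ) (a i) : K)
        rw [Finset.smul_sum]
        refine Finset.sum_congr rfl (fun i _ => ?_)
        have h := lp.single_smul (E := fun _ : ℕ => ℂ) 2 (i:ℕ) t (a i)
        rw [← h]
        rfl }
  let Ψ : (Fin M → ℂ) →ₗ[ℂ] (Fin (Module.finrank ℂ Xk) → ℂ) :=
    LinearMap.pi (fun j => ((innerSL ℂ ((b j : Xk) : K)).toLinearMap).comp ws)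
  have hMr : Module.finrank ℂ Xk < M := by omega
  have hΨnotinj : ¬ Function.Injective Ψ := by
    intro hinj
    have h := LinearMap.finrank_le_finrank_of_injective hinj
    rw [Module.finrank_fintype_fun_eq_card, Module.finrank_fintype_fun_eq_card,
      Fintype.card_fin, Fintype.card_fin] at h
    omega
  have hker : LinearMap.ker Ψ ≠ ⊥ := fun h => hΨnotinj (LinearMap.ker_eq_bot.mp h)
  obtain ⟨a, haker, hane⟩ := (Submodule.ne_bot_iff _).mp hker
  set w : K := ws a with hwdef
  have hw_ne : w ≠ 0 := by
    obtain ⟨i, hi⟩ := Function.ne_iff.mp hane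
    intro h0
    have hcoord : w (i:ℕ) = a i := by
      have h := sum_single_apply_lt a (i:ℕ) i.isLt
      have hw : w = ∑ j : Fin M, (lp.single 2 (j:ℕ) (a j) : K) := rfl
      rw [hw]
      simpa using h
    rw [h0, lp.coeFn_zero] at hcoord
    exact hi (by simpa using hcoord.symm)
  have hw_high : ∀ n, M ≤ n → w n = 0 := fun n hn => sum_single_apply_ge a n hn
  have hw_orth : w ∈ Xkᗮ := by
    have hbj : ∀ j, ⟪((b j : Xk) : K), w⟫ = 0 := by
      intro j
      have h := congrFun (LinearMap.mem_ker.mp haker) j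
      simpa [Ψ, LinearMap.pi_apply, hwdef] using h
    rw [Submodule.mem_orthogonal]
    intro ξ hξ
    have hrepr := b.sum_repr ⟨ξ, hξ⟩
    have hrepr' : ∑ j, ((b.repr ⟨ξ, hξ⟩) j) • ((b j : Xk) : K) = ξ := by
      have h := congrArg (Subtype.val) hrepr
      simp only [AddSubmonoidClass.coe_finset_sum, SetLike.val_smul] at h
      exact h
    rw [← hrepr', sum_inner]
    refine Finset.sum_eq_zero (fun j _ => ?_)
    rw [inner_smul_left, hbj j, mul_zero]
  -- w is in the closure of Yk
  have hwclos : w ∈ closure (Yk : Set K) := by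
    have horth : Ykᗮᗮ = Yk.topologicalClosure :=
      Yk.orthogonal_orthogonal_eq_closure
    have h1 : w ∈ Ykᗮᗮ := hw_orth
    rw [horth] at h1
    rw [← Submodule.topologicalClosure_coe]
    exact h1
  obtain ⟨y, hy_mem, hy_tendsto⟩ := mem_closure_iff_seq_limit.mp hwclos
  have hy_ex : ∀ j, ∃ v, v ∈ Vk ∧ f v = y j := by
    intro j
    obtain ⟨v, hv, hfv⟩ := Submodule.mem_map.mp (hy_mem j)
    exact ⟨v, hv, hfv⟩
  choose u hu_mem hu_eq using hy_ex
  have hy_cauchy : CauchySeq y := hy_tendsto.cauchySeq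
  have hu_cauchy : CauchySeq u := by
    rw [Metric.cauchySeq_iff] at hy_cauchy ⊢
    intro ε hε
    obtain ⟨Nc, hNc⟩ := hy_cauchy (ε / (G+1)) (by positivity)
    refine ⟨Nc, fun m hm n hn => ?_⟩
    have hsub : u m - u n ∈ Vk := Submodule.sub_mem _ (hu_mem m) (hu_mem n)
    have h1 : ‖u m - u n‖ ≤ G * ‖f (u m - u n)‖ := stepA _ hsub
    have h2 : f (u m - u n) = y m - y n := by rw [map_sub, hu_eq, hu_eq]
    have h3 : dist (u m) (u n) ≤ G * dist (y m) (y n) := by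
      rw [dist_eq_norm, dist_eq_norm]
      rw [h2] at h1
      exact h1
    have h4 : G * dist (y m) (y n) < G * (ε/(G+1)) :=
      mul_lt_mul_of_pos_left (hNc m hm n hn) hGpos
    have h5 : G * (ε/(G+1)) ≤ ε := by
      rw [mul_div_assoc']
      rw [div_le_iff₀ (by linarith : (0:ℝ) < G + 1)]
      nlinarith
    linarith [h3, h4, h5]
  obtain ⟨uinf, huinf⟩ := cauchySeq_tendsto_of_complete hu_cauchy
  have huinf_mem : uinf ∈ Vk := by
    have hclosed : IsClosed (high k : Set K) := isClosed_high k
    exact hclosed.mem_of_tendsto huinf (Filter.Eventually.of_forall hu_mem)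
  have hfu : f uinf = w := by
    have h1 : Filter.Tendsto (fun j => f (u j)) Filter.atTop (nhds (f uinf)) :=
      (f.continuous.tendsto uinf).comp huinf
    have h2 : (fun j => f (u j)) = y := funext hu_eq
    rw [h2] at h1
    exact tendsto_nhds_unique h1 hy_tendsto
  -- final numeric contradiction
  have hw_pos : 0 < ‖w‖ := norm_pos_iff.mpr hw_ne
  have hlow : ‖w‖ ≤ ((M:ℝ)+1)^2 * ‖Cop w‖ := Cop_low M w hw_high
  have hchain : ‖Cop w‖ ≤ β * ((1/((k:ℝ)+1)^3) * ‖uinf‖) := by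
    rw [← hfu]
    calc ‖Cop (f uinf)‖ ≤ β * ‖Dop uinf‖ := hIII uinf
    _ ≤ β * ((1/((k:ℝ)+1)^3) * ‖uinf‖) :=
      mul_le_mul_of_nonneg_left (Dop_high k uinf huinf_mem) hβ
  have hnu : ‖uinf‖ ≤ G * ‖w‖ := by
    have h := stepA uinf huinf_mem
    rw [hfu] at h
    exact h
  have hfinal : ‖w‖ ≤ (((M:ℝ)+1)^2 * β * G / ((k:ℝ)+1)^3) * ‖w‖ := by
    have h1 : ‖Cop w‖ ≤ β * ((1/((k:ℝ)+1)^3) * (G * ‖w‖)) := by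
      refine le_trans hchain ?_
      have := mul_le_mul_of_nonneg_left hnu
        (by positivity : (0:ℝ) ≤ 1/((k:ℝ)+1)^3)
      exact mul_le_mul_of_nonneg_left this hβ
    have h2 : ((M:ℝ)+1)^2 * ‖Cop w‖ ≤
        ((M:ℝ)+1)^2 * (β * ((1/((k:ℝ)+1)^3) * (G * ‖w‖))) :=
      mul_le_mul_of_nonneg_left h1 (by positivity)
    have h3 : ((M:ℝ)+1)^2 * (β * ((1/((k:ℝ)+1)^3) * (G * ‖w‖)))
        = (((M:ℝ)+1)^2 * β * G / ((k:ℝ)+1)^3) * ‖w‖ := by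
      field_simp
    linarith [hlow, h2, h3.le, h3.ge]
  have hineq : ((k:ℝ)+1)^3 ≤ ((M:ℝ)+1)^2 * β * G := by
    have hX : (0:ℝ) < ((k:ℝ)+1)^3 := by positivity
    by_contra hcon
    push_neg at hcon
    have : (((M:ℝ)+1)^2 * β * G / ((k:ℝ)+1)^3) < 1 := by
      rw [div_lt_one hX]
      exact hcon
    nlinarith [hfinal, hw_pos]
  have hM_le : (M:ℝ)+1 ≤ ((k:ℝ)+1)*((m₀:ℝ)+2) := by
    have hMk : (M:ℝ) = (k:ℝ) + (m₀:ℝ) + 1 := by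
      rw [hMdef]; push_cast; ring
    nlinarith [Nat.cast_nonneg (α := ℝ) k, Nat.cast_nonneg (α := ℝ) m₀]
  have hfin2 : ((M:ℝ)+1)^2 * β * G ≤ β * G * (((m₀:ℝ)+2)^2) * ((k:ℝ)+1)^2 := by
    have h1 : ((M:ℝ)+1)^2 ≤ (((k:ℝ)+1)*((m₀:ℝ)+2))^2 := by
      have h0 : (0:ℝ) ≤ (M:ℝ)+1 := by positivity
      exact pow_le_pow_left₀ h0 hM_le 2
    have hbg : (0:ℝ) ≤ β * G := mul_nonneg hβ hGpos.le
    calc ((M:ℝ)+1)^2 * β * G = (β * G) * ((M:ℝ)+1)^2 := by ring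
    _ ≤ (β * G) * ((((k:ℝ)+1)*((m₀:ℝ)+2))^2) := mul_le_mul_of_nonneg_left h1 hbg
    _ = β * G * (((m₀:ℝ)+2)^2) * ((k:ℝ)+1)^2 := by ring
  have hfin3 : β * G * (((m₀:ℝ)+2)^2) * ((k:ℝ)+1)^2 < ((k:ℝ)+1)^3 := by
    have h1 : (0:ℝ) < ((k:ℝ)+1)^2 := by positivity
    have h2 := mul_lt_mul_of_pos_right hkN h1
    calc β * G * (((m₀:ℝ)+2)^2) * ((k:ℝ)+1)^2
        = (β * G * ((m₀:ℝ)+2)^2) * ((k:ℝ)+1)^2 := by ring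
    _ < ((k:ℝ)+1) * ((k:ℝ)+1)^2 := h2
    _ = ((k:ℝ)+1)^3 := by ring
  linarith [hineq, hfin2, hfin3]

end Helpers

set_option maxHeartbeats 2000000 in
theorem continuous_spectrum_sum_graphs_not_boundedly_isomorphic
    (T : K₀ →L[ℂ] K₀)
    (hT : ∀ f : K₀, ∀ᵐ x ∂μ23, ((T f : K₀) : ℝ → ℂ) x = (x : ℂ) * (f : ℝ → ℂ) x) :
    ¬ ∃ V : ((K₀ × K) × (K₀ × K)) ≃L[ℂ] ((K₀ × K) × (K₀ × K)),
        V '' (((⊤ : Submodule ℂ (K₀ × K)).prod (⊥ : Submodule ℂ (K₀ × K))) :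
            Set ((K₀ × K) × (K₀ × K))) =
          (((⊤ : Submodule ℂ (K₀ × K)).prod (⊥ : Submodule ℂ (K₀ × K))) :
            Set ((K₀ × K) × (K₀ × K))) ∧
        V '' ((sumGraph T fun n : ℕ => 1 / ((n : ℂ) + 1) ^ 2) : Set ((K₀ × K) × (K₀ × K))) =
          ((sumGraph T fun n : ℕ => 1 / ((n : ℂ) + 1) ^ 3) : Set ((K₀ × K) × (K₀ × K))) := by
  rintro ⟨V, hV1, hV2⟩
  have hV2' : ⇑V '' ((sumGraph T Helpers.cc) : Set ((K₀ × K) × (K₀ × K))) =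
      ((sumGraph T Helpers.dd) : Set ((K₀ × K) × (K₀ × K))) := hV2
  -- T is bounded below by 2
  have hTlow : ∀ g : K₀, 2 * ‖g‖ ≤ ‖T g‖ := by
    intro g
    have hae : ∀ᵐ x ∂μ23, ‖(((2:ℂ) • g : K₀) : ℝ → ℂ) x‖ ≤ ‖((T g : K₀) : ℝ → ℂ) x‖ := by
      filter_upwards [hT g, MeasureTheory.Lp.coeFn_smul (2:ℂ) g,
        MeasureTheory.ae_restrict_mem measurableSet_Icc] with x hTx hsx hx
      rw [hsx]
      have h2x : (2:ℝ) ≤ x := hx.1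
      calc ‖((2:ℂ) • (g : ℝ → ℂ)) x‖ = 2 * ‖(g : ℝ → ℂ) x‖ := by
            simp [norm_smul]
      _ ≤ ‖(x:ℂ)‖ * ‖(g : ℝ → ℂ) x‖ := by
            have : ‖(x:ℂ)‖ = |x| := by rw [Complex.norm_real, Real.norm_eq_abs]
            have h3 : (2:ℝ) ≤ ‖(x:ℂ)‖ := by
              rw [Complex.norm_real, Real.norm_eq_abs, abs_of_nonneg (by linarith)]
              exact h2x
            exact mul_le_mul_of_nonneg_right h3 (norm_nonneg _)
      _ = ‖((T g : K₀) : ℝ → ℂ) x‖ := by rw [hTx, norm_mul]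
    have h1 : ‖(2:ℂ) • g‖ ≤ ‖T g‖ := by
      rw [MeasureTheory.Lp.norm_def, MeasureTheory.Lp.norm_def]
      exact ENNReal.toReal_mono (MeasureTheory.Lp.eLpNorm_ne_top _)
        (MeasureTheory.eLpNorm_mono_ae hae)
    calc 2 * ‖g‖ = ‖(2:ℂ) • g‖ := by rw [norm_smul]; simp
    _ ≤ ‖T g‖ := h1
  classical
  set L := K₀ × K
  set H := L × L
  let S : L →L[ℂ] L := T.prodMap Helpers.Cop
  let S' : L →L[ℂ] L := T.prodMap Helpers.Dop
  have hS : ∀ x : L, S x = (T x.1, Helpers.Cop x.2) := fun x => rfl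
  have hS' : ∀ x : L, S' x = (T x.1, Helpers.Dop x.2) := fun x => rfl
  -- membership translations
  have hgr_c : ∀ x : L, ((x, S x) : H) ∈ ((sumGraph T Helpers.cc) : Set H) :=
    fun x => ⟨rfl, fun n => rfl⟩
  have hgr_d : ∀ x : L, ((x, S' x) : H) ∈ ((sumGraph T Helpers.dd) : Set H) :=
    fun x => ⟨rfl, fun n => rfl⟩
  have hmem_c : ∀ p : H, p ∈ ((sumGraph T Helpers.cc) : Set H) → p.2 = S p.1 := by
    rintro p ⟨h1, h2⟩
    refine Prod.ext h1 (lp.ext (funext fun n => ?_))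
    exact h2 n
  have hmem_d : ∀ p : H, p ∈ ((sumGraph T Helpers.dd) : Set H) → p.2 = S' p.1 := by
    rintro p ⟨h1, h2⟩
    refine Prod.ext h1 (lp.ext (funext fun n => ?_))
    exact h2 n
  -- the basic maps
  let Vc : H →L[ℂ] H := (V : H →L[ℂ] H)
  let Wc : H →L[ℂ] H := (V.symm : H →L[ℂ] H)
  let ι2 : L →L[ℂ] H := ContinuousLinearMap.inr ℂ L L
  let π1H : H →L[ℂ] L := ContinuousLinearMap.fst ℂ L L
  let π2H : H →L[ℂ] L := ContinuousLinearMap.snd ℂ L L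
  let idS : L →L[ℂ] H := (ContinuousLinearMap.id ℂ L).prod S
  let idS' : L →L[ℂ] H := (ContinuousLinearMap.id ℂ L).prod S'
  let E : L →L[ℂ] L := π1H.comp (Vc.comp idS)
  let P : L →L[ℂ] L := π2H.comp (Vc.comp ι2)
  let F : L →L[ℂ] L := π1H.comp (Wc.comp idS')
  let Q : L →L[ℂ] L := π2H.comp (Wc.comp ι2)
  have hEdef : ∀ x : L, E x = (V (x, S x)).1 := fun x => rfl
  have hFdef : ∀ z : L, F z = (V.symm (z, S' z)).1 := fun z => rfl
  have hPdef : ∀ y : L, P y = (V ((0 : L), y)).2 := fun y => rfl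
  have hQdef : ∀ y : L, Q y = (V.symm ((0 : L), y)).2 := fun y => rfl
  -- zero-coordinate facts
  have hz1 : ∀ x : L, (V (x, (0:L))).2 = 0 := by
    intro x
    have hx : ((x, (0:L)) : H) ∈
        (((⊤ : Submodule ℂ L).prod (⊥ : Submodule ℂ L)) : Set H) := by
      exact Submodule.mem_prod.mpr ⟨Submodule.mem_top, Submodule.mem_bot _ |>.mpr rfl⟩
    have himg : V (x, (0:L)) ∈
        ⇑V '' (((⊤ : Submodule ℂ L).prod (⊥ : Submodule ℂ L)) : Set H) :=
      ⟨(x, 0), hx, rfl⟩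
    rw [hV1] at himg
    exact (Submodule.mem_bot _).mp (Submodule.mem_prod.mp himg).2
  have hz2 : ∀ z : L, (V.symm (z, (0:L))).2 = 0 := by
    intro z
    have hz : ((z, (0:L)) : H) ∈
        (((⊤ : Submodule ℂ L).prod (⊥ : Submodule ℂ L)) : Set H) := by
      exact Submodule.mem_prod.mpr ⟨Submodule.mem_top, Submodule.mem_bot _ |>.mpr rfl⟩
    rw [← hV1] at hz
    obtain ⟨p, hp, hVp⟩ := hz
    have hsymm : V.symm (z, (0:L)) = p := by
      rw [← hVp, ContinuousLinearEquiv.symm_apply_apply]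
    rw [hsymm]
    exact (Submodule.mem_bot _).mp (Submodule.mem_prod.mp hp).2
  -- graph facts
  have hg1 : ∀ x : L, (V (x, S x)).2 = S' ((V (x, S x)).1) := by
    intro x
    have himg : V (x, S x) ∈ ⇑V '' ((sumGraph T Helpers.cc) : Set H) :=
      ⟨(x, S x), hgr_c x, rfl⟩
    rw [hV2'] at himg
    have h := hmem_d _ himg
    exact h
  have hg2 : ∀ z : L, (V.symm (z, S' z)).2 = S ((V.symm (z, S' z)).1) := by
    intro z
    have hz : ((z, S' z) : H) ∈ ((sumGraph T Helpers.dd) : Set H) := hgr_d z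
    rw [← hV2'] at hz
    obtain ⟨p, hp, hVp⟩ := hz
    have hsymm : V.symm (z, S' z) = p := by
      rw [← hVp, ContinuousLinearEquiv.symm_apply_apply]
    rw [hsymm]
    have h := hmem_c _ hp
    rw [h]
  -- packaged graph images
  have hEx : ∀ x : L, V (x, S x) = (E x, S' (E x)) := by
    intro x
    exact Prod.ext rfl (hg1 x)
  have hFz : ∀ z : L, V.symm (z, S' z) = (F z, S (F z)) := by
    intro z
    exact Prod.ext rfl (hg2 z)
  -- inverse identities
  have hEF : ∀ z : L, E (F z) = z := by
    intro z
    have h1 : ((F z, S (F z)) : H) = V.symm (z, S' z) := (hFz z).symm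
    have h2 : E (F z) = (V (F z, S (F z))).1 := rfl
    rw [h2, h1, ContinuousLinearEquiv.apply_symm_apply]
  have hFE : ∀ x : L, F (E x) = x := by
    intro x
    have h1 : ((E x, S' (E x)) : H) = V (x, S x) := (hEx x).symm
    have h2 : F (E x) = (V.symm (E x, S' (E x))).1 := rfl
    rw [h2, h1, ContinuousLinearEquiv.symm_apply_apply]
  -- intertwining identities
  have hPS : ∀ x : L, P (S x) = S' (E x) := by
    intro x
    have h0 : (((0:L), S x) : H) = (x, S x) - (x, (0:L)) := by
      rw [Prod.mk_sub_mk]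
      rw [sub_self, sub_zero]
    rw [hPdef, h0, map_sub]
    have h1 : ((V (x, S x) - V (x, (0:L)))).2 = (V (x, S x)).2 - (V (x, (0:L))).2 := rfl
    rw [h1, hz1, sub_zero, hg1]
    rfl
  have hQS' : ∀ z : L, Q (S' z) = S (F z) := by
    intro z
    have h0 : (((0:L), S' z) : H) = (z, S' z) - (z, (0:L)) := by
      rw [Prod.mk_sub_mk]
      rw [sub_self, sub_zero]
    rw [hQdef, h0, map_sub]
    have h1 : ((V.symm (z, S' z) - V.symm (z, (0:L)))).2
        = (V.symm (z, S' z)).2 - (V.symm (z, (0:L))).2 := rfl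
    rw [h1, hz2, sub_zero, hg2]
    rfl
  -- corner maps on K
  let ιK : K →L[ℂ] L := ContinuousLinearMap.inr ℂ K₀ K
  let ιK0 : K₀ →L[ℂ] L := ContinuousLinearMap.inl ℂ K₀ K
  let πK : L →L[ℂ] K := ContinuousLinearMap.snd ℂ K₀ K
  let πK0 : L →L[ℂ] K₀ := ContinuousLinearMap.fst ℂ K₀ K
  let e : K →L[ℂ] K := πK.comp (E.comp ιK)
  let eK0 : K₀ →L[ℂ] K := πK.comp (E.comp ιK0)
  let e' : K →L[ℂ] K₀ := πK0.comp (E.comp ιK)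
  let f : K →L[ℂ] K := πK.comp (F.comp ιK)
  let fK0 : K₀ →L[ℂ] K := πK.comp (F.comp ιK0)
  let f' : K →L[ℂ] K₀ := πK0.comp (F.comp ιK)
  let q : K →L[ℂ] K := πK.comp (Q.comp ιK)
  let q₀ : K →L[ℂ] K₀ := πK0.comp (Q.comp ιK)
  let p₀ : K →L[ℂ] K₀ := πK0.comp (P.comp ιK)
  -- corner identities
  have hc1 : ∀ u : K, u = eK0 (f' u) + e (f u) := by
    intro u
    have hsplit : F (((0:K₀), u) : L) = ((f' u, (0:K)) : L) + (((0:K₀), f u) : L) := by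
      have h1 : F (((0:K₀), u) : L) = (f' u, f u) := rfl
      rw [h1, Prod.mk_add_mk, add_zero, zero_add]
    have h3 := congrArg Prod.snd (hEF (((0:K₀), u) : L))
    rw [hsplit, map_add] at h3
    have h4 : (E ((f' u, (0:K)) : L) + E (((0:K₀), f u) : L)).2
        = eK0 (f' u) + e (f u) := rfl
    rw [h4] at h3
    exact h3.symm
  have hc2 : ∀ u : K, u = fK0 (e' u) + f (e u) := by
    intro u
    have hsplit : E (((0:K₀), u) : L) = ((e' u, (0:K)) : L) + (((0:K₀), e u) : L) := by
      have h1 : E (((0:K₀), u) : L) = (e' u, e u) := rfl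
      rw [h1, Prod.mk_add_mk, add_zero, zero_add]
    have h3 := congrArg Prod.snd (hFE (((0:K₀), u) : L))
    rw [hsplit, map_add] at h3
    have h4 : (F ((e' u, (0:K)) : L) + F (((0:K₀), e u) : L)).2
        = fK0 (e' u) + f (e u) := rfl
    rw [h4] at h3
    exact h3.symm
  have hS'0 : ∀ u : K, S' (((0:K₀), u) : L) = (((0:K₀), Helpers.Dop u) : L) := by
    intro u
    rw [hS']
    show ((T 0, Helpers.Dop u) : L) = _
    rw [map_zero]
  have hS0 : ∀ u : K, S (((0:K₀), u) : L) = (((0:K₀), Helpers.Cop u) : L) := by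
    intro u
    rw [hS]
    show ((T 0, Helpers.Cop u) : L) = _
    rw [map_zero]
  have hc3 : ∀ u : K, T (f' u) = q₀ (Helpers.Dop u) := by
    intro u
    have h := hQS' (((0:K₀), u) : L)
    rw [hS'0] at h
    have h1 := congrArg Prod.fst h
    exact h1.symm
  have hc4 : ∀ u : K, Helpers.Cop (f u) = q (Helpers.Dop u) := by
    intro u
    have h := hQS' (((0:K₀), u) : L)
    rw [hS'0] at h
    have h1 := congrArg Prod.snd h
    exact h1.symm
  have hc5 : ∀ u : K, T (e' u) = p₀ (Helpers.Cop u) := by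
    intro u
    have h := hPS (((0:K₀), u) : L)
    rw [hS0] at h
    have h1 := congrArg Prod.fst h
    exact h1.symm
  -- norm bounds
  have hfp : ∀ u : K, ‖f' u‖ ≤ (‖q₀‖/2) * ‖Helpers.Dop u‖ := by
    intro u
    have h1 : 2 * ‖f' u‖ ≤ ‖T (f' u)‖ := hTlow (f' u)
    rw [hc3 u] at h1
    have h2 : ‖q₀ (Helpers.Dop u)‖ ≤ ‖q₀‖ * ‖Helpers.Dop u‖ := q₀.le_opNorm _
    linarith
  have hep : ∀ u : K, ‖e' u‖ ≤ (‖p₀‖/2) * ‖Helpers.Cop u‖ := by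
    intro u
    have h1 : 2 * ‖e' u‖ ≤ ‖T (e' u)‖ := hTlow (e' u)
    rw [hc5 u] at h1
    have h2 : ‖p₀ (Helpers.Cop u)‖ ≤ ‖p₀‖ * ‖Helpers.Cop u‖ := p₀.le_opNorm _
    linarith
  have hI : ∀ u : K, ‖u - e (f u)‖ ≤ (‖eK0‖ * (‖q₀‖/2)) * ‖Helpers.Dop u‖ := by
    intro u
    have hsub : u - e (f u) = eK0 (f' u) := sub_eq_of_eq_add (hc1 u)
    rw [hsub]
    calc ‖eK0 (f' u)‖ ≤ ‖eK0‖ * ‖f' u‖ := eK0.le_opNorm _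
    _ ≤ ‖eK0‖ * ((‖q₀‖/2) * ‖Helpers.Dop u‖) :=
      mul_le_mul_of_nonneg_left (hfp u) (norm_nonneg _)
    _ = (‖eK0‖ * (‖q₀‖/2)) * ‖Helpers.Dop u‖ := by ring
  have hII : ∀ u : K, ‖u - f (e u)‖ ≤ (‖fK0‖ * (‖p₀‖/2)) * ‖Helpers.Cop u‖ := by
    intro u
    have hsub : u - f (e u) = fK0 (e' u) := sub_eq_of_eq_add (hc2 u)
    rw [hsub]
    calc ‖fK0 (e' u)‖ ≤ ‖fK0‖ * ‖e' u‖ := fK0.le_opNorm _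
    _ ≤ ‖fK0‖ * ((‖p₀‖/2) * ‖Helpers.Cop u‖) :=
      mul_le_mul_of_nonneg_left (hep u) (norm_nonneg _)
    _ = (‖fK0‖ * (‖p₀‖/2)) * ‖Helpers.Cop u‖ := by ring
  have hIII : ∀ u : K, ‖Helpers.Cop (f u)‖ ≤ ‖q‖ * ‖Helpers.Dop u‖ := by
    intro u
    rw [hc4 u]
    exact q.le_opNorm _
  exact Helpers.endgame e f (‖eK0‖ * (‖q₀‖/2)) (‖fK0‖ * (‖p₀‖/2)) ‖q‖
    (by positivity) (by positivity) (norm_nonneg _) hI hII hIII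

end
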